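/- arXiv:2512.13952 — 2 statements merged into one kernel-verified Lean document; each statement's English description precedes it below -/
import Mathlib

section
/- Surjectivity of the Laplacian on homogeneous polynomials (Lemma 3.7, from Colding–Minicozzi): For every integer n ≥ 1 and every integer d ≥ 0, the linear map Δ : A_{d+2}^n → A_d^n given by the polynomial Laplacian is surjective; that is, for every homogeneous polynomial p of degree d in n variables there is a homogeneous polynomial q of degree d+2 with Δq = p. -/
noncomputable section

open MvPolynomial

/-- The polynomial Laplacian `Δp = ∑ i, ∂²p/∂x_i²` on `MvPolynomial (Fin n) ℝ`. -/
def polyLap (n : ℕ) : MvPolynomial (Fin n) ℝ →ₗ[ℝ] MvPolynomial (Fin n) ℝ :=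
  ∑ i : Fin n, ((pderiv i).toLinearMap ∘ₗ (pderiv i).toLinearMap)

lemma polyLap_apply (n : ℕ) (p : MvPolynomial (Fin n) ℝ) :
    polyLap n p = ∑ i : Fin n, pderiv i (pderiv i p) := by
  simp [polyLap]

lemma polyLap_monomial (n : ℕ) (β : Fin n →₀ ℕ) (c : ℝ) :
    polyLap n (monomial β c)
      = ∑ i : Fin n,
          monomial (β - Finsupp.single i 2) ((c * (β i : ℝ)) * ((β i - 1 : ℕ) : ℝ)) := by
  rw [polyLap_apply]
  refine Finset.sum_congr rfl fun i _ => ?_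
  rw [pderiv_monomial, pderiv_monomial]
  congr 1
  · rw [tsub_tsub, ← Finsupp.single_add]
  · rw [Finsupp.tsub_apply, Finsupp.single_apply, if_pos rfl]

lemma degree_eq_sum_univ {n : ℕ} (α : Fin n →₀ ℕ) : α.degree = ∑ i : Fin n, α i :=
  Finset.sum_subset (Finset.subset_univ _)
    (fun _ _ hi => Finsupp.notMem_support_iff.mp hi)

lemma sum_tsub_single {n : ℕ} (s : Finset (Fin n)) (β : Fin n →₀ ℕ) (i : Fin n)
    (hi : i ∈ s) (k : ℕ) (hk : k ≤ β i) :
    ∑ j ∈ s, (β - Finsupp.single i k) j = (∑ j ∈ s, β j) - k := by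
  have h1 : ∀ j ∈ s.erase i, (β - Finsupp.single i k) j = β j := by
    intro j hj
    rw [Finsupp.tsub_apply, Finsupp.single_apply,
      if_neg (Ne.symm (Finset.ne_of_mem_erase hj))]
    simp
  have h2 : (β - Finsupp.single i k) i = β i - k := by
    rw [Finsupp.tsub_apply, Finsupp.single_apply, if_pos rfl]
  have h3 : ∑ j ∈ s, (β - Finsupp.single i k) j
      = (∑ j ∈ s.erase i, β j) + (β i - k) := by
    rw [← Finset.sum_erase_add _ _ hi, Finset.sum_congr rfl h1, h2]
  have h4 : ∑ j ∈ s, β j = (∑ j ∈ s.erase i, β j) + β i :=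
    (Finset.sum_erase_add _ _ hi).symm
  rw [h3, h4]
  omega

lemma polyLap_key (n d : ℕ) [NeZero n] : ∀ m : ℕ, ∀ (c : ℝ) (α : Fin n →₀ ℕ),
    (∑ i ∈ Finset.univ.erase (0 : Fin n), α i) ≤ m → α.degree = d →
    ∃ q ∈ homogeneousSubmodule (Fin n) ℝ (d + 2), polyLap n q = monomial α c := by
  intro m
  induction m using Nat.strong_induction_on with
  | _ m ih =>
  intro c α hw hd
  rw [degree_eq_sum_univ] at hd
  set β : Fin n →₀ ℕ := α + Finsupp.single 0 2 with hβ
  have hβ0 : β 0 = α 0 + 2 := by simp [hβ]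
  have hβi : ∀ i : Fin n, i ≠ 0 → β i = α i := by
    intro i hi
    simp [hβ, Finsupp.single_apply, (Ne.symm hi)]
  have hwβ : ∀ j ∈ Finset.univ.erase (0 : Fin n), β j = α j := fun j hj =>
    hβi j (Finset.ne_of_mem_erase hj)
  have hsumβ : ∑ j : Fin n, β j = d + 2 := by
    rw [← Finset.sum_erase_add _ _ (Finset.mem_univ (0 : Fin n)),
        Finset.sum_congr rfl hwβ, hβ0,
        ← hd, ← Finset.sum_erase_add _ _ (Finset.mem_univ (0 : Fin n))]
    ring
  set c0 : ℝ := c / (((α 0 : ℝ) + 1) * ((α 0 : ℝ) + 2)) with hc0def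
  have ht0 : monomial (β - Finsupp.single (0 : Fin n) 2)
      ((c0 * (β 0 : ℝ)) * ((β 0 - 1 : ℕ) : ℝ)) = monomial α c := by
    have hsub : β - Finsupp.single (0 : Fin n) 2 = α := by
      rw [hβ, add_tsub_cancel_right]
    have harith : (c0 * ((β 0 : ℕ) : ℝ)) * ((β 0 - 1 : ℕ) : ℝ) = c := by
      have h1 : ((α 0 : ℝ) + 1) ≠ 0 := by positivity
      have h2 : ((α 0 : ℝ) + 2) ≠ 0 := by positivity
      rw [hβ0, show α 0 + 2 - 1 = α 0 + 1 from rfl, hc0def]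
      push_cast
      field_simp
    rw [hsub, harith]
  -- preimages for the error terms
  have H : ∀ i : Fin n, ∃ q ∈ homogeneousSubmodule (Fin n) ℝ (d + 2),
      polyLap n q = (if i = 0 then 0 else
        monomial (β - Finsupp.single i 2) ((c0 * (β i : ℝ)) * ((β i - 1 : ℕ) : ℝ))) := by
    intro i
    by_cases hi : i = 0
    · exact ⟨0, Submodule.zero_mem _, by simp [hi]⟩
    rw [if_neg hi]
    have hβia : β i = α i := hβi i hi
    by_cases hsmall : α i ≤ 1
    · refine ⟨0, Submodule.zero_mem _, ?_⟩
      have hz : (c0 * (β i : ℝ)) * ((β i - 1 : ℕ) : ℝ) = 0 := by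
        rcases Nat.le_one_iff_eq_zero_or_eq_one.mp hsmall with h | h <;>
          simp [hβia, h]
      simp [hz]
    · push_neg at hsmall
      have h2βi : 2 ≤ β i := by omega
      have hi' : i ∈ Finset.univ.erase (0 : Fin n) :=
        Finset.mem_erase.mpr ⟨hi, Finset.mem_univ i⟩
      have hm2 : 2 ≤ m := by
        calc 2 ≤ α i := by omega
        _ ≤ ∑ j ∈ Finset.univ.erase (0 : Fin n), α j :=
            Finset.single_le_sum (fun _ _ => Nat.zero_le _) hi'
        _ ≤ m := hw
      set γ : Fin n →₀ ℕ := β - Finsupp.single i 2 with hγ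
      have e : ∑ j ∈ Finset.univ.erase (0 : Fin n), β j
          = ∑ j ∈ Finset.univ.erase (0 : Fin n), α j := Finset.sum_congr rfl hwβ
      have hwγ : (∑ j ∈ Finset.univ.erase (0 : Fin n), γ j) ≤ m - 1 := by
        rw [hγ, sum_tsub_single _ _ _ hi' _ h2βi, e]
        omega
      have hdγ : γ.degree = d := by
        rw [degree_eq_sum_univ, hγ,
          sum_tsub_single _ _ _ (Finset.mem_univ i) _ h2βi, hsumβ]
        omega
      exact ih (m - 1) (by omega) ((c0 * (β i : ℝ)) * ((β i - 1 : ℕ) : ℝ)) γ hwγ hdγ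
  choose f hf1 hf2 using H
  refine ⟨monomial β c0 - ∑ i ∈ Finset.univ.erase (0 : Fin n), f i, ?_, ?_⟩
  · refine Submodule.sub_mem _ ?_ (Submodule.sum_mem _ fun i _ => hf1 i)
    exact isHomogeneous_monomial _ (by rw [degree_eq_sum_univ, hsumβ])
  · rw [map_sub, map_sum, polyLap_monomial]
    have hsum2 : ∑ i ∈ Finset.univ.erase (0 : Fin n), polyLap n (f i)
        = ∑ i ∈ Finset.univ.erase (0 : Fin n),
            monomial (β - Finsupp.single i 2) ((c0 * (β i : ℝ)) * ((β i - 1 : ℕ) : ℝ)) := by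
      refine Finset.sum_congr rfl fun i hi => ?_
      rw [hf2 i, if_neg (Finset.ne_of_mem_erase hi)]
    rw [hsum2, ← Finset.sum_erase_add _ _ (Finset.mem_univ (0 : Fin n)), ht0]
    ring

/-- **Surjectivity of the Laplacian on homogeneous polynomials** (Lemma 3.7, from
Colding–Minicozzi): `Δ : A_{d+2}^n → A_d^n` is onto. -/
theorem polyLap_surjective_homogeneous (n : ℕ) (hn : 1 ≤ n) (d : ℕ) :
    ∀ p ∈ homogeneousSubmodule (Fin n) ℝ d,
      ∃ q ∈ homogeneousSubmodule (Fin n) ℝ (d + 2), polyLap n q = p := by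
  haveI : NeZero n := ⟨by omega⟩
  intro p hp
  rw [mem_homogeneousSubmodule] at hp
  have H : ∀ α ∈ p.support, ∃ q ∈ homogeneousSubmodule (Fin n) ℝ (d + 2),
      polyLap n q = monomial α (coeff α p) := by
    intro α hα
    refine polyLap_key n d _ (coeff α p) α le_rfl ?_
    have := hp (mem_support_iff.mp hα)
    rw [Finsupp.degree_eq_weight_one]
    exact this
  choose f hf1 hf2 using H
  refine ⟨∑ α ∈ p.support.attach, f α.1 α.2, ?_, ?_⟩
  · exact Submodule.sum_mem _ fun α _ => hf1 α.1 α.2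
  · rw [map_sum]
    conv_rhs => rw [p.as_sum]
    rw [← Finset.sum_attach p.support fun α => monomial α (coeff α p)]
    exact Finset.sum_congr rfl fun α _ => hf2 α.1 α.2
end
end

section
/- Surjectivity of the bilaplacian on homogeneous polynomials (Lemma 3.8, part 1): For every integer n ≥ 1 and every integer d ≥ 0, the linear map ΔΔ : A_{d+4}^n → A_d^n given by the square of the polynomial Laplacian is surjective. -/
noncomputable section

open MvPolynomial

namespace BilapAux

variable {n : ℕ}

lemma degree_eq_sum_univ (d : Fin n →₀ ℕ) : d.degree = ∑ i, d i :=
  Finset.sum_subset (Finset.subset_univ _) (fun i _ hi => Finsupp.notMem_support_iff.mp hi)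

lemma degree_add_single (m : Fin n →₀ ℕ) (i0 : Fin n) (k : ℕ) :
    (m + Finsupp.single i0 k).degree = m.degree + k := by
  rw [degree_eq_sum_univ, degree_eq_sum_univ]
  simp only [Finsupp.add_apply, Finset.sum_add_distrib]
  congr 1
  simp [Finsupp.single_apply]

/-- Formal double antiderivative in the variable `i0`. -/
def intOp (n : ℕ) (i0 : Fin n) : MvPolynomial (Fin n) ℝ →ₗ[ℝ] MvPolynomial (Fin n) ℝ :=
  (basisMonomials (Fin n) ℝ).constr ℝ fun m =>
    monomial (m + Finsupp.single i0 2) (((m i0 : ℝ) + 1)⁻¹ * ((m i0 : ℝ) + 2)⁻¹)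

lemma intOp_monomial (i0 : Fin n) (m : Fin n →₀ ℕ) (c : ℝ) :
    intOp n i0 (monomial m c)
      = monomial (m + Finsupp.single i0 2) (c * (((m i0 : ℝ) + 1)⁻¹ * ((m i0 : ℝ) + 2)⁻¹)) := by
  have h : (monomial m c : MvPolynomial (Fin n) ℝ) = c • (basisMonomials (Fin n) ℝ m) := by
    rw [coe_basisMonomials]
    simp [smul_monomial]
  rw [h, map_smul, intOp, Module.Basis.constr_basis, smul_monomial, smul_eq_mul]

lemma pderiv_pderiv_intOp (i0 : Fin n) (p : MvPolynomial (Fin n) ℝ) :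
    pderiv i0 (pderiv i0 (intOp n i0 p)) = p := by
  have h : ((pderiv i0).toLinearMap ∘ₗ ((pderiv i0).toLinearMap ∘ₗ intOp n i0))
      = LinearMap.id (R := ℝ) (M := MvPolynomial (Fin n) ℝ) := by
    apply (basisMonomials (Fin n) ℝ).ext
    intro m
    rw [coe_basisMonomials]
    simp only [LinearMap.comp_apply, Derivation.coeFn_coe, LinearMap.id_apply]
    rw [intOp_monomial, pderiv_monomial, pderiv_monomial]
    have h1 : m + Finsupp.single i0 2 - Finsupp.single i0 1 - Finsupp.single i0 1 = m := by
      ext j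
      rcases eq_or_ne i0 j with hj | hj
      · subst hj
        simp only [Finsupp.tsub_apply, Finsupp.add_apply, Finsupp.single_eq_same]
        omega
      · simp only [Finsupp.tsub_apply, Finsupp.add_apply, Finsupp.single_eq_of_ne' hj]
        omega
    have h2 : (m + Finsupp.single i0 2 : Fin n →₀ ℕ) i0 = m i0 + 2 := by
      simp only [Finsupp.add_apply, Finsupp.single_eq_same]
    have h3 : (m + Finsupp.single i0 2 - Finsupp.single i0 1 : Fin n →₀ ℕ) i0 = m i0 + 1 := by
      simp only [Finsupp.tsub_apply, Finsupp.add_apply, Finsupp.single_eq_same]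
      omega
    rw [h1, h2, h3]
    congr 1
    have hx1 : ((m i0 : ℝ) + 1) ≠ 0 := by positivity
    have hx2 : ((m i0 : ℝ) + 2) ≠ 0 := by positivity
    push_cast
    field_simp
  exact DFunLike.congr_fun h p

lemma intOp_isHomogeneous (i0 : Fin n) {p : MvPolynomial (Fin n) ℝ} {e : ℕ}
    (hp : p.IsHomogeneous e) : (intOp n i0 p).IsHomogeneous (e + 2) := by
  conv_lhs => rw [p.as_sum]
  rw [map_sum]
  apply IsHomogeneous.sum
  intro m hm
  rw [intOp_monomial]
  apply isHomogeneous_monomial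
  rw [degree_add_single]
  have hd : m.degree = e := by
    have := hp (mem_support_iff.mp hm)
    rw [Finsupp.degree_eq_weight_one]; exact this
  rw [hd]

lemma pderiv_isHomogeneous (i : Fin n) {p : MvPolynomial (Fin n) ℝ} {k : ℕ}
    (hp : p.IsHomogeneous (k + 1)) : (pderiv i p).IsHomogeneous k := by
  conv_lhs => rw [p.as_sum]
  rw [map_sum]
  apply IsHomogeneous.sum
  intro m hm
  rw [pderiv_monomial]
  by_cases hmi : m i = 0
  · rw [hmi]
    simp only [Nat.cast_zero, mul_zero, map_zero]
    exact isHomogeneous_zero _ _ _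
  · apply isHomogeneous_monomial
    have hd : m.degree = k + 1 := by
      have := hp (mem_support_iff.mp hm)
      rw [Finsupp.degree_eq_weight_one]; exact this
    have hsplit : (m - Finsupp.single i 1) + Finsupp.single i 1 = m := by
      ext j
      rcases eq_or_ne i j with hj | hj
      · subst hj
        simp only [Finsupp.add_apply, Finsupp.tsub_apply, Finsupp.single_eq_same]
        omega
      · simp only [Finsupp.add_apply, Finsupp.tsub_apply, Finsupp.single_eq_of_ne' hj]
        omega
    have := degree_add_single (m - Finsupp.single i 1) i 1
    rw [hsplit, hd] at this
    omega

/-- All monomials of `p` have `i0`-exponent at least `j`. -/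
def Qp (i0 : Fin n) (j : ℕ) (p : MvPolynomial (Fin n) ℝ) : Prop :=
  ∀ m ∈ p.support, j ≤ m i0

lemma Qp_of_coeff (i0 : Fin n) (j : ℕ) {p : MvPolynomial (Fin n) ℝ}
    (h : ∀ m : Fin n →₀ ℕ, coeff m p ≠ 0 → j ≤ m i0) : Qp i0 j p :=
  fun m hm => h m (mem_support_iff.mp hm)

lemma Qp_intOp (i0 : Fin n) {j : ℕ} {p : MvPolynomial (Fin n) ℝ} (hp : Qp i0 j p) :
    Qp i0 (j + 2) (intOp n i0 p) := by
  apply Qp_of_coeff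
  intro m' hm'
  rw [p.as_sum, map_sum] at hm'
  simp only [intOp_monomial] at hm'
  rw [coeff_sum] at hm'
  obtain ⟨m, hm, hne⟩ := Finset.exists_ne_zero_of_sum_ne_zero hm'
  rw [coeff_monomial] at hne
  by_cases heq : m + Finsupp.single i0 2 = m'
  · have := hp m hm
    rw [← heq]
    simp only [Finsupp.add_apply, Finsupp.single_eq_same]
    omega
  · rw [if_neg heq] at hne
    exact absurd rfl hne

lemma Qp_pderiv (i0 i : Fin n) (hi : i ≠ i0) {j : ℕ} {p : MvPolynomial (Fin n) ℝ}
    (hp : Qp i0 j p) : Qp i0 j (pderiv i p) := by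
  apply Qp_of_coeff
  intro m' hm'
  rw [p.as_sum, map_sum] at hm'
  simp only [pderiv_monomial] at hm'
  rw [coeff_sum] at hm'
  obtain ⟨m, hm, hne⟩ := Finset.exists_ne_zero_of_sum_ne_zero hm'
  rw [coeff_monomial] at hne
  by_cases heq : m - Finsupp.single i 1 = m'
  · have := hp m hm
    rw [← heq]
    simp only [Finsupp.tsub_apply, Finsupp.single_eq_of_ne' hi]
    omega
  · rw [if_neg heq] at hne
    exact absurd rfl hne

/-- The Laplacian missing the `i0` variable. -/
def lapRest (n : ℕ) (i0 : Fin n) : MvPolynomial (Fin n) ℝ →ₗ[ℝ] MvPolynomial (Fin n) ℝ :=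
  ∑ i ∈ Finset.univ.erase i0, ((pderiv i).toLinearMap ∘ₗ (pderiv i).toLinearMap)

lemma polyLap_eq (i0 : Fin n) (q : MvPolynomial (Fin n) ℝ) :
    polyLap n q = pderiv i0 (pderiv i0 q) + lapRest n i0 q := by
  rw [polyLap, lapRest, ← Finset.add_sum_erase _ _ (Finset.mem_univ i0)]
  simp

lemma lapRest_isHomogeneous (i0 : Fin n) {p : MvPolynomial (Fin n) ℝ} {k : ℕ}
    (hp : p.IsHomogeneous (k + 2)) : (lapRest n i0 p).IsHomogeneous k := by
  rw [lapRest, LinearMap.sum_apply]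
  apply IsHomogeneous.sum
  intro i _
  simp only [LinearMap.comp_apply, Derivation.coeFn_coe]
  exact pderiv_isHomogeneous i (pderiv_isHomogeneous i hp)

lemma Qp_sum (i0 : Fin n) (j : ℕ) {ι : Type*} (s : Finset ι)
    (f : ι → MvPolynomial (Fin n) ℝ) (h : ∀ i ∈ s, Qp i0 j (f i)) :
    Qp i0 j (∑ i ∈ s, f i) := by
  apply Qp_of_coeff
  intro m hm
  rw [coeff_sum] at hm
  obtain ⟨i, hi, hne⟩ := Finset.exists_ne_zero_of_sum_ne_zero hm
  exact h i hi m (mem_support_iff.mpr hne)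

lemma Qp_lapRest (i0 : Fin n) {j : ℕ} {p : MvPolynomial (Fin n) ℝ} (hp : Qp i0 j p) :
    Qp i0 j (lapRest n i0 p) := by
  rw [lapRest, LinearMap.sum_apply]
  apply Qp_sum
  intro i hi
  have hine : i ≠ i0 := (Finset.mem_erase.mp hi).1
  simp only [LinearMap.comp_apply, Derivation.coeFn_coe]
  exact Qp_pderiv i0 i hine (Qp_pderiv i0 i hine hp)

lemma Qp_zero_of_large (i0 : Fin n) {e j : ℕ} {p : MvPolynomial (Fin n) ℝ}
    (hp : p.IsHomogeneous e) (hq : Qp i0 j p) (h : e < j) : p = 0 := by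
  rw [← support_eq_empty]
  by_contra hne
  obtain ⟨m, hm⟩ := Finset.nonempty_of_ne_empty hne
  have hd : m.degree = e := by
    have := hp (mem_support_iff.mp hm)
    rw [Finsupp.degree_eq_weight_one]; exact this
  have h1 : j ≤ m i0 := hq m hm
  have h2 : m i0 ≤ m.degree := Finsupp.le_degree i0 m
  omega

/-- Surjectivity of the Laplacian on homogeneous polynomials. -/
lemma lap_surj (n : ℕ) (hn : 1 ≤ n) (e : ℕ) (p : MvPolynomial (Fin n) ℝ)
    (hp : p.IsHomogeneous e) :
    ∃ q : MvPolynomial (Fin n) ℝ, q.IsHomogeneous (e + 2) ∧ polyLap n q = p := by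
  set i0 : Fin n := ⟨0, hn⟩ with hi0
  set I := intOp n i0 with hI
  set L' := lapRest n i0 with hL'
  set f : MvPolynomial (Fin n) ℝ →ₗ[ℝ] MvPolynomial (Fin n) ℝ := L' ∘ₗ I with hf
  set a : ℕ → MvPolynomial (Fin n) ℝ := fun k => (f ^ k) p with ha
  have ha0 : a 0 = p := by simp [ha]
  have hastep : ∀ k, a (k + 1) = f (a k) := by
    intro k
    simp only [ha, pow_succ', Module.End.mul_apply]
  have hhom : ∀ k, (a k).IsHomogeneous e := by
    intro k
    induction k with
    | zero => rw [ha0]; exact hp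
    | succ k ih =>
      rw [hastep k, hf]
      simp only [LinearMap.comp_apply]
      exact lapRest_isHomogeneous i0 (intOp_isHomogeneous i0 ih)
  have hQ : ∀ k, Qp i0 (2 * k) (a k) := by
    intro k
    induction k with
    | zero => exact fun m _ => Nat.zero_le _
    | succ k ih =>
      rw [hastep k, hf]
      simp only [LinearMap.comp_apply]
      have := Qp_lapRest i0 (Qp_intOp i0 ih)
      intro m hm
      have := this m hm
      omega
  have hvanish : a (e + 1) = 0 :=
    Qp_zero_of_large i0 (hhom (e + 1)) (hQ (e + 1)) (by omega)
  refine ⟨∑ k ∈ Finset.range (e + 2), (-1 : ℝ) ^ k • I (a k), ?_, ?_⟩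
  · apply IsHomogeneous.sum
    intro k _
    exact (mem_homogeneousSubmodule _ _).mp
      ((homogeneousSubmodule (Fin n) ℝ (e + 2)).smul_mem _
        ((mem_homogeneousSubmodule _ _).mpr (intOp_isHomogeneous i0 (hhom k))))
  · rw [map_sum]
    have hterm : ∀ k, polyLap n ((-1 : ℝ) ^ k • I (a k))
        = (-1 : ℝ) ^ k • a k - (-1 : ℝ) ^ (k + 1) • a (k + 1) := by
      intro k
      rw [map_smul, polyLap_eq i0, hI, pderiv_pderiv_intOp, ← hL', ← LinearMap.comp_apply,
        ← hf, ← hastep k]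
      rw [smul_add, pow_succ, mul_neg_one, neg_smul, sub_neg_eq_add]
    calc ∑ k ∈ Finset.range (e + 2), polyLap n ((-1 : ℝ) ^ k • I (a k))
        = ∑ k ∈ Finset.range (e + 2),
            ((fun k => (-1 : ℝ) ^ k • a k) k - (fun k => (-1 : ℝ) ^ k • a k) (k + 1)) := by
          exact Finset.sum_congr rfl fun k _ => hterm k
      _ = (-1 : ℝ) ^ 0 • a 0 - (-1 : ℝ) ^ (e + 2) • a (e + 2) := Finset.sum_range_sub' _ _
      _ = p := by
          rw [hastep (e + 1), hvanish, map_zero, smul_zero, sub_zero, ha0, pow_zero, one_smul]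

end BilapAux

/-- **Surjectivity of the bilaplacian on homogeneous polynomials** (Lemma 3.8, part 1):
`ΔΔ : A_{d+4}^n → A_d^n` is onto. -/
theorem polyBilap_surjective_homogeneous (n : ℕ) (hn : 1 ≤ n) (d : ℕ) :
    ∀ p ∈ homogeneousSubmodule (Fin n) ℝ d,
      ∃ q ∈ homogeneousSubmodule (Fin n) ℝ (d + 4), polyLap n (polyLap n q) = p := by
  intro p hp
  rw [mem_homogeneousSubmodule] at hp
  obtain ⟨q1, hq1, hq1e⟩ := BilapAux.lap_surj n hn d p hp
  obtain ⟨q, hq, hqe⟩ := BilapAux.lap_surj n hn (d + 2) q1 hq1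
  refine ⟨q, ?_, by rw [hqe, hq1e]⟩
  rw [mem_homogeneousSubmodule]
  have h42 : d + 2 + 2 = d + 4 := by omega
  rw [← h42]
  exact hq
end
end
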